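/- For all complex numbers x₁, x₂, x₃, x₄, y₁, y₂, y₃, y₄, the following are equivalent: (i) the 8×6 matrix M₂₄ has rank at most 5, the 8×9 matrix M₃₆ has rank at most 7, and the 8×10 matrix M₄₆ has rank at most 7; (ii) rank A₁(x,y) ≤ 1 and rank A₂(x,y) ≤ 1, i.e. (x₁,…,x₄,y₁,…,y₄) ∈ Y. -/

import Mathlib

open Matrix

/-- The 4×2 matrix `A₁(x,y)` with rows `(x₁,x₂), (x₃,x₄), (y₂,y₁), (y₄,y₃)`. -/
def A1 (x₁ x₂ x₃ x₄ y₁ y₂ y₃ y₄ : ℂ) : Matrix (Fin 4) (Fin 2) ℂ :=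
  !![x₁, x₂; x₃, x₄; y₂, y₁; y₄, y₃]

/-- The 4×2 matrix `A₂(x,y)` with rows `(x₁,x₃), (x₂,x₄), (y₃,y₁), (y₄,y₂)`. -/
def A2 (x₁ x₂ x₃ x₄ y₁ y₂ y₃ y₄ : ℂ) : Matrix (Fin 4) (Fin 2) ℂ :=
  !![x₁, x₃; x₂, x₄; y₃, y₁; y₄, y₂]

/-- The Wyser–Yong matrix `M₂₄` restricted to the normal slice. -/
def M24 (x₁ x₂ x₃ x₄ y₁ y₂ y₃ y₄ : ℂ) : Matrix (Fin 8) (Fin 6) ℂ :=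
  !![1, 0, 1, 0, 0, -1;
     0, 1, 0, 1, -1, 0;
     x₂, x₁, x₂, x₁, x₁, x₂;
     x₄, x₃, x₄, x₃, x₃, x₄;
     0, 0, 1, 0, 0, 1;
     0, 0, 0, 1, 1, 0;
     0, 0, y₁, y₂, -y₂, -y₁;
     0, 0, y₃, y₄, -y₄, -y₃]

/-- The Wyser–Yong matrix `M₃₆` restricted to the normal slice. -/
def M36 (x₁ x₂ x₃ x₄ y₁ y₂ y₃ y₄ : ℂ) : Matrix (Fin 8) (Fin 9) ℂ :=
  !![1, 0, 0, 1, 0, 0, -1, 0, 0;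
     0, 1, -1, 0, 1, -1, 0, 0, 0;
     x₂, x₁, x₁, x₂, x₁, x₁, x₂, 1, 0;
     x₄, x₃, x₃, x₄, x₃, x₃, x₄, 0, 1;
     0, 0, 0, 1, 0, 0, 1, 0, 0;
     0, 0, 0, 0, 1, 1, 0, 0, 0;
     0, 0, 0, y₁, y₂, -y₂, -y₁, 0, 1;
     0, 0, 0, y₃, y₄, -y₄, -y₃, 1, 0]

/-- The Wyser–Yong matrix `M₄₆` restricted to the normal slice. -/
def M46 (x₁ x₂ x₃ x₄ y₁ y₂ y₃ y₄ : ℂ) : Matrix (Fin 8) (Fin 10) ℂ :=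
  !![1, 0, 0, -1, 1, 0, 0, -1, 0, 0;
     0, 1, -1, 0, 0, 1, -1, 0, 0, 0;
     x₂, x₁, x₁, x₂, x₂, x₁, x₁, x₂, 1, 0;
     x₄, x₃, x₃, x₄, x₄, x₃, x₃, x₄, 0, 1;
     0, 0, 0, 0, 1, 0, 0, 1, 0, 0;
     0, 0, 0, 0, 0, 1, 1, 0, 0, 0;
     0, 0, 0, 0, y₁, y₂, -y₂, -y₁, 0, 1;
     0, 0, 0, 0, y₃, y₄, -y₄, -y₃, 1, 0]


section AuxLemmas

private theorem rank_lt_iff_ker {m n : ℕ} (M : Matrix (Fin m) (Fin n) ℂ) :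
    M.rank < n ↔ ∃ v : Fin n → ℂ, v ≠ 0 ∧ M *ᵥ v = 0 := by
  have h := LinearMap.finrank_range_add_finrank_ker M.mulVecLin
  rw [Module.finrank_pi, Fintype.card_fin] at h
  rw [Matrix.rank]
  constructor
  · intro hr
    have hk : LinearMap.ker M.mulVecLin ≠ ⊥ := by
      intro hbot; rw [hbot, finrank_bot] at h; omega
    obtain ⟨v, hv, hv0⟩ := Submodule.ne_bot_iff _ |>.mp hk
    exact ⟨v, hv0, hv⟩
  · rintro ⟨v, hv0, hv⟩
    have hk : LinearMap.ker M.mulVecLin ≠ ⊥ :=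
      Submodule.ne_bot_iff _ |>.mpr ⟨v, hv, hv0⟩
    have h2 : Module.finrank ℂ (LinearMap.ker M.mulVecLin) ≠ 0 :=
      fun h0 => hk (Submodule.finrank_eq_zero.mp h0)
    omega

private theorem expand2' (v : Fin 2 → ℂ) : v = ![v 0, v 1] := by
  funext i; fin_cases i <;> rfl

private theorem expand6' (v : Fin 6 → ℂ) : v = ![v 0, v 1, v 2, v 3, v 4, v 5] := by
  funext i; fin_cases i <;> rfl

private theorem expand8' (v : Fin 8 → ℂ) : v = ![v 0, v 1, v 2, v 3, v 4, v 5, v 6, v 7] := by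
  funext i; fin_cases i <;> rfl

private theorem hA1iff (x₁ x₂ x₃ x₄ y₁ y₂ y₃ y₄ : ℂ) :
    (A1 x₁ x₂ x₃ x₄ y₁ y₂ y₃ y₄).rank ≤ 1 ↔
    ∃ a b : ℂ, ¬(a = 0 ∧ b = 0) ∧ a*x₁ + b*x₂ = 0 ∧ a*x₃ + b*x₄ = 0 ∧
      a*y₂ + b*y₁ = 0 ∧ a*y₄ + b*y₃ = 0 := by
  have hr : (A1 x₁ x₂ x₃ x₄ y₁ y₂ y₃ y₄).rank ≤ 1 ↔
      (A1 x₁ x₂ x₃ x₄ y₁ y₂ y₃ y₄).rank < 2 := by omega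
  rw [hr, rank_lt_iff_ker]
  constructor
  · rintro ⟨v, hv0, hv⟩
    have hex := expand2' v
    rw [hex] at hv
    simp only [A1, Matrix.cons_mulVec, Matrix.cons_dotProduct, Matrix.head_cons,
      Matrix.tail_cons, Matrix.dotProduct_of_isEmpty, Matrix.empty_mulVec,
      Matrix.cons_eq_zero_iff, one_mul, zero_mul, neg_mul, add_zero, zero_add, and_true,
      Matrix.zero_empty, neg_neg] at hv
    obtain ⟨e1, e2, e3, e4⟩ := hv
    refine ⟨v 0, v 1, ?_, by linear_combination e1, by linear_combination e2,
      by linear_combination e3, by linear_combination e4⟩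
    rintro ⟨ha, hb⟩
    apply hv0
    rw [hex, ha, hb]
    simp
  · rintro ⟨a, b, hab, h1, h2, h3, h4⟩
    refine ⟨![a, b], ?_, ?_⟩
    · intro h
      exact hab ⟨congrFun h 0, congrFun h 1⟩
    · simp only [A1, Matrix.cons_mulVec, Matrix.cons_dotProduct, Matrix.head_cons,
        Matrix.tail_cons, Matrix.dotProduct_of_isEmpty, Matrix.empty_mulVec,
        Matrix.cons_eq_zero_iff, one_mul, zero_mul, neg_mul, add_zero, zero_add, and_true,
        Matrix.zero_empty, neg_neg]
      exact ⟨by linear_combination h1, by linear_combination h2,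
        by linear_combination h3, by linear_combination h4⟩

private theorem hA2iff (x₁ x₂ x₃ x₄ y₁ y₂ y₃ y₄ : ℂ) :
    (A2 x₁ x₂ x₃ x₄ y₁ y₂ y₃ y₄).rank ≤ 1 ↔
    ∃ a b : ℂ, ¬(a = 0 ∧ b = 0) ∧ a*x₁ + b*x₃ = 0 ∧ a*x₂ + b*x₄ = 0 ∧
      a*y₃ + b*y₁ = 0 ∧ a*y₄ + b*y₂ = 0 := by
  have hr : (A2 x₁ x₂ x₃ x₄ y₁ y₂ y₃ y₄).rank ≤ 1 ↔
      (A2 x₁ x₂ x₃ x₄ y₁ y₂ y₃ y₄).rank < 2 := by omega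
  rw [hr, rank_lt_iff_ker]
  constructor
  · rintro ⟨v, hv0, hv⟩
    have hex := expand2' v
    rw [hex] at hv
    simp only [A2, Matrix.cons_mulVec, Matrix.cons_dotProduct, Matrix.head_cons,
      Matrix.tail_cons, Matrix.dotProduct_of_isEmpty, Matrix.empty_mulVec,
      Matrix.cons_eq_zero_iff, one_mul, zero_mul, neg_mul, add_zero, zero_add, and_true,
      Matrix.zero_empty, neg_neg] at hv
    obtain ⟨e1, e2, e3, e4⟩ := hv
    refine ⟨v 0, v 1, ?_, by linear_combination e1, by linear_combination e2,
      by linear_combination e3, by linear_combination e4⟩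
    rintro ⟨ha, hb⟩
    apply hv0
    rw [hex, ha, hb]
    simp
  · rintro ⟨a, b, hab, h1, h2, h3, h4⟩
    refine ⟨![a, b], ?_, ?_⟩
    · intro h
      exact hab ⟨congrFun h 0, congrFun h 1⟩
    · simp only [A2, Matrix.cons_mulVec, Matrix.cons_dotProduct, Matrix.head_cons,
        Matrix.tail_cons, Matrix.dotProduct_of_isEmpty, Matrix.empty_mulVec,
        Matrix.cons_eq_zero_iff, one_mul, zero_mul, neg_mul, add_zero, zero_add, and_true,
        Matrix.zero_empty, neg_neg]
      exact ⟨by linear_combination h1, by linear_combination h2,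
        by linear_combination h3, by linear_combination h4⟩

private theorem hM24iff (x₁ x₂ x₃ x₄ y₁ y₂ y₃ y₄ : ℂ) :
    (M24 x₁ x₂ x₃ x₄ y₁ y₂ y₃ y₄).rank ≤ 5 ↔
    ∃ a b : ℂ, ¬(a = 0 ∧ b = 0) ∧ a*x₁ + b*x₂ = 0 ∧ a*x₃ + b*x₄ = 0 ∧
      a*y₂ + b*y₁ = 0 ∧ a*y₄ + b*y₃ = 0 := by
  have hr : (M24 x₁ x₂ x₃ x₄ y₁ y₂ y₃ y₄).rank ≤ 5 ↔
      (M24 x₁ x₂ x₃ x₄ y₁ y₂ y₃ y₄).rank < 6 := by omega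
  rw [hr, rank_lt_iff_ker]
  constructor
  · rintro ⟨v, hv0, hv⟩
    have hex := expand6' v
    rw [hex] at hv
    simp only [M24, Matrix.cons_mulVec, Matrix.cons_dotProduct, Matrix.head_cons,
      Matrix.tail_cons, Matrix.dotProduct_of_isEmpty, Matrix.empty_mulVec,
      Matrix.cons_eq_zero_iff, one_mul, zero_mul, neg_mul, add_zero, zero_add, and_true,
      Matrix.zero_empty, neg_neg] at hv
    obtain ⟨e1, e2, e3, e4, e5, e6, e7, e8⟩ := hv
    refine ⟨v 3, v 2, ?_,
      by linear_combination (x₂/2)*e1 + (x₁/2)*e2 - (1/2)*e3 + x₂*e5 + x₁*e6,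
      by linear_combination (x₄/2)*e1 + (x₃/2)*e2 - (1/2)*e4 + x₄*e5 + x₃*e6,
      by linear_combination (1/2)*e7 + (y₁/2)*e5 + (y₂/2)*e6,
      by linear_combination (1/2)*e8 + (y₃/2)*e5 + (y₄/2)*e6⟩
    rintro ⟨ha, hb⟩
    apply hv0
    rw [hex]
    have h0 : v 0 = 0 := by linear_combination e1 + e5 - 2*hb
    have h1 : v 1 = 0 := by linear_combination e2 + e6 - 2*ha
    have h4 : v 4 = 0 := by linear_combination e6 - ha
    have h5 : v 5 = 0 := by linear_combination e5 - hb
    rw [h0, h1, hb, ha, h4, h5]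
    simp
  · rintro ⟨a, b, hab, h1, h2, h3, h4⟩
    refine ⟨![-2*b, -2*a, b, a, -a, -b], ?_, ?_⟩
    · intro h
      exact hab ⟨congrFun h 3, congrFun h 2⟩
    · simp only [M24, Matrix.cons_mulVec, Matrix.cons_dotProduct, Matrix.head_cons,
        Matrix.tail_cons, Matrix.dotProduct_of_isEmpty, Matrix.empty_mulVec,
        Matrix.cons_eq_zero_iff, one_mul, zero_mul, neg_mul, add_zero, zero_add, and_true,
        Matrix.zero_empty, neg_neg]
      exact ⟨by ring, by ring, by linear_combination -2*h1, by linear_combination -2*h2,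
        by ring, by ring, by linear_combination 2*h3, by linear_combination 2*h4⟩

private theorem hM46iff (x₁ x₂ x₃ x₄ y₁ y₂ y₃ y₄ : ℂ) :
    (M46 x₁ x₂ x₃ x₄ y₁ y₂ y₃ y₄).rank ≤ 7 ↔
    ∃ a b : ℂ, ¬(a = 0 ∧ b = 0) ∧ a*x₁ + b*x₃ = 0 ∧ a*x₂ + b*x₄ = 0 ∧
      a*y₃ + b*y₁ = 0 ∧ a*y₄ + b*y₂ = 0 := by
  have hr : (M46 x₁ x₂ x₃ x₄ y₁ y₂ y₃ y₄).rank ≤ 7 ↔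
      (M46 x₁ x₂ x₃ x₄ y₁ y₂ y₃ y₄)ᵀ.rank < 8 := by
    rw [Matrix.rank_transpose]; omega
  rw [hr, rank_lt_iff_ker]
  constructor
  · rintro ⟨u, hu0, hu⟩
    have hex := expand8' u
    rw [hex, Matrix.mulVec_transpose] at hu
    simp only [M46, Matrix.vecMul_cons, Matrix.cons_vecMul, Matrix.empty_vecMul,
      Matrix.smul_cons, Matrix.smul_empty, Matrix.cons_add, Matrix.empty_add_empty,
      Matrix.cons_eq_zero_iff, smul_eq_mul, mul_one, mul_zero, mul_neg, add_zero, zero_add,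
      and_true, Matrix.zero_empty, smul_zero, Matrix.head_cons, Matrix.tail_cons] at hu
    obtain ⟨f1, f2, f3, f4, f5, f6, f7, f8, f9, f10⟩ := hu
    refine ⟨u 2, u 3, ?_,
      by linear_combination (1/2)*f2 + (1/2)*f3,
      by linear_combination (1/2)*f1 + (1/2)*f4,
      by linear_combination -(1/2)*f5 + (1/2)*f1 + (1/2)*f8 - (1/2)*f4 + y₁*f10 + y₃*f9,
      by linear_combination -(1/2)*f6 + (1/2)*f2 + (1/2)*f7 - (1/2)*f3 + y₂*f10 + y₄*f9⟩
    rintro ⟨ha, hb⟩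
    apply hu0
    rw [hex]
    have h0 : u 0 = 0 := by linear_combination (1/2)*f1 - (1/2)*f4
    have h1 : u 1 = 0 := by linear_combination (1/2)*f2 - (1/2)*f3
    have h4 : u 4 = 0 := by linear_combination (1/2)*(f5 - f1 + f8 - f4)
    have h5 : u 5 = 0 := by linear_combination (1/2)*(f6 - f2 + f7 - f3)
    have h6 : u 6 = 0 := by linear_combination f10 - hb
    have h7 : u 7 = 0 := by linear_combination f9 - ha
    rw [h0, h1, ha, hb, h4, h5, h6, h7]
    simp
  · rintro ⟨a, b, hab, h1, h2, h3, h4⟩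
    refine ⟨![0, 0, a, b, 0, 0, -b, -a], ?_, ?_⟩
    · intro h
      exact hab ⟨congrFun h 2, congrFun h 3⟩
    · rw [Matrix.mulVec_transpose]
      simp only [M46, Matrix.vecMul_cons, Matrix.cons_vecMul, Matrix.empty_vecMul,
        Matrix.smul_cons, Matrix.smul_empty, Matrix.cons_add, Matrix.empty_add_empty,
        Matrix.cons_eq_zero_iff, smul_eq_mul, mul_one, mul_zero, mul_neg, add_zero, zero_add,
        and_true, Matrix.zero_empty, smul_zero, Matrix.head_cons, Matrix.tail_cons]
      exact ⟨by linear_combination h2, by linear_combination h1, by linear_combination h1,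
        by linear_combination h2, by linear_combination h2 - h3, by linear_combination h1 - h4,
        by linear_combination h1 + h4, by linear_combination h2 + h3, by ring, by ring⟩

private theorem hM36le (x₁ x₂ x₃ x₄ y₁ y₂ y₃ y₄ : ℂ)
    (a b : ℂ) (hab : ¬(a = 0 ∧ b = 0)) (h1 : a*x₁ + b*x₃ = 0) (h2 : a*x₂ + b*x₄ = 0)
    (h3 : a*y₃ + b*y₁ = 0) (h4 : a*y₄ + b*y₂ = 0) :
    (M36 x₁ x₂ x₃ x₄ y₁ y₂ y₃ y₄).rank ≤ 7 := by
  have hr : (M36 x₁ x₂ x₃ x₄ y₁ y₂ y₃ y₄)ᵀ.rank < 8 →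
      (M36 x₁ x₂ x₃ x₄ y₁ y₂ y₃ y₄).rank ≤ 7 := by
    rw [Matrix.rank_transpose]; omega
  apply hr
  rw [rank_lt_iff_ker]
  refine ⟨![0, 0, a, b, 0, 0, -b, -a], ?_, ?_⟩
  · intro h
    exact hab ⟨congrFun h 2, congrFun h 3⟩
  · rw [Matrix.mulVec_transpose]
    simp only [M36, Matrix.vecMul_cons, Matrix.cons_vecMul, Matrix.empty_vecMul,
      Matrix.smul_cons, Matrix.smul_empty, Matrix.cons_add, Matrix.empty_add_empty,
      Matrix.cons_eq_zero_iff, smul_eq_mul, mul_one, mul_zero, mul_neg, add_zero, zero_add,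
      and_true, Matrix.zero_empty, smul_zero, Matrix.head_cons, Matrix.tail_cons]
    exact ⟨by linear_combination h2, by linear_combination h1, by linear_combination h1,
      by linear_combination h2 - h3, by linear_combination h1 - h4,
      by linear_combination h1 + h4, by linear_combination h2 + h3, by ring, by ring⟩

end AuxLemmas

theorem stmt11 (x₁ x₂ x₃ x₄ y₁ y₂ y₃ y₄ : ℂ) :
    ((M24 x₁ x₂ x₃ x₄ y₁ y₂ y₃ y₄).rank ≤ 5 ∧
      (M36 x₁ x₂ x₃ x₄ y₁ y₂ y₃ y₄).rank ≤ 7 ∧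
      (M46 x₁ x₂ x₃ x₄ y₁ y₂ y₃ y₄).rank ≤ 7) ↔
    ((A1 x₁ x₂ x₃ x₄ y₁ y₂ y₃ y₄).rank ≤ 1 ∧
      (A2 x₁ x₂ x₃ x₄ y₁ y₂ y₃ y₄).rank ≤ 1) := by
  constructor
  · rintro ⟨h24, _h36, h46⟩
    exact ⟨(hA1iff x₁ x₂ x₃ x₄ y₁ y₂ y₃ y₄).mpr ((hM24iff x₁ x₂ x₃ x₄ y₁ y₂ y₃ y₄).mp h24),
      (hA2iff x₁ x₂ x₃ x₄ y₁ y₂ y₃ y₄).mpr ((hM46iff x₁ x₂ x₃ x₄ y₁ y₂ y₃ y₄).mp h46)⟩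
  · rintro ⟨hA1le, hA2le⟩
    obtain ⟨a, b, hab, h1, h2, h3, h4⟩ := (hA2iff x₁ x₂ x₃ x₄ y₁ y₂ y₃ y₄).mp hA2le
    exact ⟨(hM24iff x₁ x₂ x₃ x₄ y₁ y₂ y₃ y₄).mpr ((hA1iff x₁ x₂ x₃ x₄ y₁ y₂ y₃ y₄).mp hA1le),
      hM36le x₁ x₂ x₃ x₄ y₁ y₂ y₃ y₄ a b hab h1 h2 h3 h4,
      (hM46iff x₁ x₂ x₃ x₄ y₁ y₂ y₃ y₄).mpr ⟨a, b, hab, h1, h2, h3, h4⟩⟩
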